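/- arXiv:1502.00486 — 4 statements merged into one kernel-verified Lean document; each statement's English description precedes it below -/
import Mathlib

section
/- For all integers v > k ≥ 2, the complete k-uniform hypergraph K_v^k on v vertices (whose hyperedges are all k-subsets of the vertex set) is strictly k-balanced. -/
open MeasureTheory Finset Filter

noncomputable section
attribute [local instance] Classical.propDecidable

/-- A `k`-uniform hypergraph: a finite vertex set (of naturals) together with a
set of hyperedges, each of which is a `k`-subset of the vertex set. -/
structure UHypergraph (k : ℕ) where
  verts : Finset ℕ
  edges : Finset (Finset ℕ)
  edge_sub : ∀ e ∈ edges, e ⊆ verts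
  edge_card : ∀ e ∈ edges, e.card = k

namespace UHypergraph

variable {k : ℕ}

/-- `F'` is a subgraph of `F`. -/
def IsSubgraph (F' F : UHypergraph k) : Prop :=
  F'.verts ⊆ F.verts ∧ F'.edges ⊆ F.edges

/-- The degree `d_F(U)` of a vertex set `U`: the number of hyperedges containing `U`. -/
def deg (F : UHypergraph k) (U : Finset ℕ) : ℕ :=
  (F.edges.filter fun e => U ⊆ e).card

/-- The maximum `i`-degree `Δ_i(F)`. -/
def maxDeg (F : UHypergraph k) (i : ℕ) : ℕ :=
  (F.verts.powersetCard i).sup F.deg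

/-- `F` is strictly `k`-balanced. -/
def StrictlyBalanced (F : UHypergraph k) : Prop :=
  k + 1 ≤ F.verts.card ∧
  ∀ F' : UHypergraph k, F'.IsSubgraph F → F' ≠ F → k + 1 ≤ F'.verts.card →
    ((F'.edges.card : ℝ) - 1) / ((F'.verts.card : ℝ) - (k : ℝ)) <
      ((F.edges.card : ℝ) - 1) / ((F.verts.card : ℝ) - (k : ℝ))

/-- `h_i`: the maximum number of edges of a proper subgraph of `F` on `i` vertices. -/
def hsub (F : UHypergraph k) (i : ℕ) : ℕ :=
  sSup {m | ∃ F' : UHypergraph k, F'.IsSubgraph F ∧ F' ≠ F ∧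
    F'.verts.card = i ∧ F'.edges.card = m}

/-- `δ_i := i - k - (h_i - 1)(v-k)/(h-1)`. -/
def deltaI (F : UHypergraph k) (i : ℕ) : ℝ :=
  (i : ℝ) - (k : ℝ) -
    ((F.hsub i : ℝ) - 1) * ((F.verts.card : ℝ) - (k : ℝ)) / ((F.edges.card : ℝ) - 1)

/-- `δ := min_{k+1 ≤ i ≤ v} δ_i`. -/
def deltaMin (F : UHypergraph k) : ℝ :=
  sInf {x | ∃ i : ℕ, k + 1 ≤ i ∧ i ≤ F.verts.card ∧ x = F.deltaI i}

end UHypergraph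

variable {k : ℕ} {V : Type*} [DecidableEq V]

/-- The edge set of the image of `F` under a vertex map `φ`. -/
def copyEdges (F : UHypergraph k) (φ : ℕ → V) : Finset (Finset V) :=
  F.edges.image fun e => e.image φ

/-- `A` is (the edge set of) a copy of `F` inside the edge set `E`. -/
def IsCopy (F : UHypergraph k) (E A : Finset (Finset V)) : Prop :=
  ∃ φ : ℕ → V, Set.InjOn φ F.verts ∧ A = copyEdges F φ ∧ A ⊆ E

/-- `E` contains a copy of `F`. -/
def HasCopy (F : UHypergraph k) (E : Finset (Finset V)) : Prop :=
  ∃ A, IsCopy F E A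

/-- The greedy `F`-free process run on a list of candidate hyperedges: each edge
is added unless it would create a copy of `F`. -/
def greedy (F : UHypergraph k) (L : List (Finset V)) : Finset (Finset V) :=
  L.foldl (fun G e => if HasCopy F (insert e G) then G else insert e G) ∅

/-- An `(r,f)`-cluster (given by the edge sets of its `r` copies of `F`). -/
def IsCluster (F : UHypergraph k) (E : Finset (Finset V)) (f : Finset V) (r : ℕ)
    (c : Fin r → Finset (Finset V)) : Prop :=
  (∀ i, IsCopy F E (c i) ∧ f ∈ c i) ∧
  (∀ i : Fin r, 0 < (i : ℕ) → ∃ g ∈ c i, ∀ j, j < i → g ∉ c j)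

/-- `E` contains an `(r,f)`-cluster. -/
def HasCluster (F : UHypergraph k) (E : Finset (Finset V)) (f : Finset V) (r : ℕ) : Prop :=
  ∃ c : Fin r → Finset (Finset V), IsCluster F E f r c

/-- The number of `(r,f)`-clusters in `E`. -/
def clusterCount (F : UHypergraph k) (E : Finset (Finset V)) (f : Finset V) (r : ℕ) : ℕ :=
  Set.ncard {c : Fin r → Finset (Finset V) | IsCluster F E f r c}

/-- The hyperedges of the complete `k`-uniform hypergraph on `[n] = Fin n`. -/
def kSets (n k : ℕ) : Finset (Finset (Fin n)) :=
  Finset.univ.powersetCard k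

/-- The probability space of independent uniform-`[0,1]` birthtimes on the
(potential) hyperedges of `K_n^k`. -/
def birthμ (n : ℕ) : Measure (Finset (Fin n) → ℝ) :=
  Measure.pi fun _ => volume.restrict (Set.Icc (0 : ℝ) 1)

/-- The binomial random hypergraph `H_{n,p}`: the hyperedges with birthtime at most `p`. -/
def Hnp (n k : ℕ) (p : ℝ) (ω : Finset (Fin n) → ℝ) : Finset (Finset (Fin n)) :=
  (kSets n k).filter fun e => ω e ≤ p

/-- `H_{n,p}^-`: delete from `H_{n,p}` every hyperedge lying in a copy of `F`. -/
def HnpMinus (F : UHypergraph k) (n : ℕ) (p : ℝ) (ω : Finset (Fin n) → ℝ) :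
    Finset (Finset (Fin n)) :=
  (Hnp n k p ω).filter fun e => ¬ ∃ A, IsCopy F (Hnp n k p ω) A ∧ e ∈ A

/-- The greedy `F`-free process `R_{n,p}`: process the hyperedges with birthtime
at most `p` in increasing order of birthtime, adding each unless it creates a copy of `F`. -/
def Rproc (F : UHypergraph k) (n : ℕ) (β : Finset (Fin n) → ℝ) (p : ℝ) :
    Finset (Finset (Fin n)) :=
  greedy F ((((kSets n k).filter fun e => β e ≤ p).toList).mergeSort fun a b => β a ≤ β b)

/-- The maximum `i`-degree of a hypergraph on vertex set `Fin n` given by its edge set. -/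
def hostMaxDeg {n : ℕ} (E : Finset (Finset (Fin n))) (i : ℕ) : ℕ :=
  ((Finset.univ : Finset (Fin n)).powersetCard i).sup fun U =>
    (E.filter fun e => U ⊆ e).card

/-- The edge probability `p := 1/(c₂ (n^{v-k} log n)^{1/(h-1)})`. -/
def pval (c₂ : ℝ) (k v h n : ℕ) : ℝ :=
  1 / (c₂ * (((n : ℝ) ^ ((v : ℝ) - (k : ℝ)) * Real.log n) ^ ((1 : ℝ) / ((h : ℝ) - 1))))

/-- The degree bound `t := c₁ n p (log n)^{3/(d-1)}`. -/
def tval (c₁ c₂ : ℝ) (k v h d n : ℕ) : ℝ :=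
  c₁ * (n : ℝ) * pval c₂ k v h n * Real.log n ^ ((3 : ℝ) / ((d : ℝ) - 1))

/-- The subgraph `F̂` of `F`: all vertices of `F`, and those hyperedges meeting `U`
in at most `k-2` vertices. -/
def hatF (F : UHypergraph k) (U : Finset ℕ) : UHypergraph k where
  verts := F.verts
  edges := F.edges.filter fun e => (e ∩ U).card ≤ k - 2
  edge_sub := fun e he => F.edge_sub e (Finset.mem_filter.mp he).1
  edge_card := fun e he => F.edge_card e (Finset.mem_filter.mp he).1

/-- The neighbourhood `N_F(U)` of `U` in `F`. -/
def nbhd (F : UHypergraph k) (U : Finset ℕ) : Finset ℕ :=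
  F.verts.filter fun x => insert x U ∈ F.edges

/-- `S(H,T,V')`: the set of (edge sets of) copies of `F̂` in the edge set `E` mapping
`u i ↦ v' i`, `N_F(U)` into `T`, and `V(F) \ N_F(U)` outside `T`. -/
def Scopies (F : UHypergraph k) (U : Finset ℕ) (u : Fin (k - 1) → ℕ) {n : ℕ}
    (T : Finset (Fin n)) (v' : Fin (k - 1) → Fin n) (E : Finset (Finset (Fin n))) :
    Set (Finset (Finset (Fin n))) :=
  {A | ∃ φ : ℕ → Fin n, Set.InjOn φ F.verts ∧
    A = copyEdges (hatF F U) φ ∧ A ⊆ E ∧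
    (∀ i, φ (u i) = v' i) ∧
    (∀ x ∈ nbhd F U, φ x ∈ T) ∧
    (∀ x ∈ F.verts, x ∉ nbhd F U → φ x ∉ T)}

lemma UHypergraph.ext' {k : ℕ} {A B : UHypergraph k} (h1 : A.verts = B.verts)
    (h2 : A.edges = B.edges) : A = B := by
  cases A; cases B; simp_all

/-- key natural-number inequality: `C(m,k-1)*(m-k) ≥ C(m,k)`. -/
lemma choose_key (k m : ℕ) (hk : 2 ≤ k) (hm : k + 1 ≤ m) :
    m.choose k ≤ m.choose (k - 1) * (m - k) := by
  have hk1 : k - 1 + 1 = k := by omega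
  have hid : m.choose k * k = m.choose (k - 1) * (m - (k - 1)) := by
    have := Nat.choose_succ_right_eq m (k - 1)
    rwa [hk1] at this
  have hpos : 0 < m.choose (k - 1) := Nat.choose_pos (by omega)
  have h2 : (m - k) * k ≥ m - (k - 1) := by
    have : m - (k - 1) = (m - k) + 1 := by omega
    rw [this]
    have hd : 1 ≤ m - k := by omega
    nlinarith
  have : m.choose k * k ≤ m.choose (k - 1) * ((m - k) * k) := by
    calc m.choose k * k = m.choose (k - 1) * (m - (k - 1)) := hid
    _ ≤ m.choose (k - 1) * ((m - k) * k) := Nat.mul_le_mul_left _ h2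
  have hkpos : 0 < k := by omega
  have := Nat.le_of_mul_le_mul_right (by linarith [this] : m.choose k * k ≤ m.choose (k - 1) * (m - k) * k) hkpos
  exact this

/-- the density function is strictly increasing (one step). -/
lemma density_step (k m : ℕ) (hk : 2 ≤ k) (hm : k + 1 ≤ m) :
    ((m.choose k : ℝ) - 1) / ((m : ℝ) - k) <
      (((m + 1).choose k : ℝ) - 1) / (((m : ℝ) + 1) - k) := by
  have hd1 : (0 : ℝ) < (m : ℝ) - k := by
    have : (k : ℝ) + 1 ≤ m := by exact_mod_cast hm
    linarith
  have hd2 : (0 : ℝ) < ((m : ℝ) + 1) - k := by linarith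
  rw [div_lt_div_iff₀ hd1 hd2]
  have hsplit : (m + 1).choose k = m.choose (k - 1) + m.choose k := by
    have hk1 : k - 1 + 1 = k := by omega
    simpa [Nat.succ_eq_add_one, hk1] using Nat.choose_succ_succ m (k - 1)
  have hkey := choose_key k m hk hm
  have hkeyR : (m.choose k : ℝ) ≤ (m.choose (k - 1) : ℝ) * ((m : ℝ) - k) := by
    have : ((m - k : ℕ) : ℝ) = (m : ℝ) - k := by
      have : k ≤ m := by omega
      push_cast [this]; ring
    calc (m.choose k : ℝ) ≤ ((m.choose (k - 1) * (m - k) : ℕ) : ℝ) := by exact_mod_cast hkey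
    _ = (m.choose (k - 1) : ℝ) * ((m : ℝ) - k) := by push_cast [Nat.cast_sub (by omega : k ≤ m)]; ring
  have hpos : (1 : ℝ) ≤ (m.choose k : ℝ) := by
    exact_mod_cast Nat.one_le_iff_ne_zero.mpr (Nat.choose_pos (by omega : k ≤ m)).ne'
  have hsR : (((m + 1).choose k : ℝ)) = (m.choose (k - 1) : ℝ) + (m.choose k : ℝ) := by
    exact_mod_cast hsplit
  nlinarith [hkeyR, hpos, hsR, hd1]

/-- the density function is strictly increasing. -/
lemma density_mono (k a b : ℕ) (hk : 2 ≤ k) (ha : k + 1 ≤ a) (hab : a < b) :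
    ((a.choose k : ℝ) - 1) / ((a : ℝ) - k) <
      ((b.choose k : ℝ) - 1) / ((b : ℝ) - k) := by
  induction b with
  | zero => omega
  | succ n ih =>
    rcases Nat.lt_or_ge a n with h | h
    · have := ih h
      have step := density_step k n hk (by omega)
      push_cast at step ⊢
      linarith
    · have : a = n := by omega
      subst this
      have step := density_step k a hk ha
      push_cast at step ⊢
      linarith

/-- Complete k-uniform hypergraphs are strictly k-balanced. -/
theorem stmt_6 (k v : ℕ) (hk : 2 ≤ k) (hv : k < v) (K : UHypergraph k)
    (hverts : K.verts = Finset.range v)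
    (hedges : K.edges = (Finset.range v).powersetCard k) :
    K.StrictlyBalanced := by
  have hKv : K.verts.card = v := by rw [hverts, Finset.card_range]
  have hKe : K.edges.card = v.choose k := by
    rw [hedges, Finset.card_powersetCard, Finset.card_range]
  constructor
  · omega
  intro F' hsub hne hv'
  obtain ⟨hvsub, hesub⟩ := hsub
  set v' := F'.verts.card with hv'def
  have hv'le : v' ≤ v := by
    have := Finset.card_le_card hvsub
    rwa [hKv] at this
  have he' : F'.edges.card ≤ v'.choose k := by
    have hsub2 : F'.edges ⊆ F'.verts.powersetCard k := fun e he =>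
      Finset.mem_powersetCard.mpr ⟨F'.edge_sub e he, F'.edge_card e he⟩
    calc F'.edges.card ≤ (F'.verts.powersetCard k).card := Finset.card_le_card hsub2
    _ = v'.choose k := by rw [Finset.card_powersetCard]
  rw [hKv, hKe]
  rcases eq_or_lt_of_le hv'le with heq | hlt
  · -- same vertex set, fewer edges
    have hveq : F'.verts = K.verts :=
      Finset.eq_of_subset_of_card_le hvsub (by rw [hKv, ← heq])
    have hess : F'.edges ⊂ K.edges := by
      refine ⟨hesub, fun h => hne (UHypergraph.ext' hveq (Finset.Subset.antisymm hesub h))⟩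
    have hcard : F'.edges.card < v.choose k := by
      have := Finset.card_lt_card hess
      rwa [hKe] at this
    rw [heq]
    have hd : (0 : ℝ) < (v : ℝ) - k := by
      have : (k : ℝ) < v := by exact_mod_cast hv
      linarith
    rw [div_lt_div_iff₀ hd hd]
    have : (F'.edges.card : ℝ) < (v.choose k : ℝ) := by exact_mod_cast hcard
    nlinarith
  · -- fewer vertices
    have hd' : (0 : ℝ) < (v' : ℝ) - k := by
      have : (k : ℝ) + 1 ≤ v' := by exact_mod_cast hv'
      linarith
    calc ((F'.edges.card : ℝ) - 1) / ((v' : ℝ) - k)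
        ≤ ((v'.choose k : ℝ) - 1) / ((v' : ℝ) - k) := by
          gcongr ((?_ : ℝ) - 1) / _
          exact_mod_cast he'
    _ < ((v.choose k : ℝ) - 1) / ((v : ℝ) - k) := density_mono k v' v hk hv' hlt
end
end

section
/- Let r ≥ 2 and ℓ ≥ k ≥ 2 be integers, and let F = K^k_{r,…,r} be the balanced complete ℓ-partite k-uniform hypergraph: its vertex set is the disjoint union of ℓ parts of size r, and its hyperedges are exactly those k-sets of vertices containing at most one vertex from each part. Then F is strictly k-balanced. -/
open MeasureTheory Finset Filter

noncomputable section
attribute [local instance] Classical.propDecidable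

variable {k : ℕ} {V : Type*} [DecidableEq V]

namespace Stmt7Aux

/-- Edge set of the balanced complete multipartite k-uniform hypergraph. -/
def sEdg (k ℓ r : ℕ) : Finset (Finset ℕ) :=
  ((Finset.range (ℓ * r)).powersetCard k).filter
    (fun e => ∀ x ∈ e, ∀ y ∈ e, x / r = y / r → x = y)

lemma mem_sEdg {k ℓ r : ℕ} {e : Finset ℕ} :
    e ∈ sEdg k ℓ r ↔ (e ⊆ Finset.range (ℓ * r) ∧ e.card = k) ∧
      ∀ x ∈ e, ∀ y ∈ e, x / r = y / r → x = y := by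
  simp only [sEdg, Finset.mem_filter, Finset.mem_powersetCard]

lemma sEdg_k0 (ℓ r : ℕ) : sEdg 0 ℓ r = {∅} := by
  ext e
  simp only [mem_sEdg, Finset.mem_singleton, Finset.card_eq_zero]
  constructor
  · rintro ⟨⟨-, h⟩, -⟩; exact h
  · rintro rfl
    exact ⟨⟨Finset.empty_subset _, rfl⟩, by simp⟩

lemma card_sEdg (r : ℕ) (hr : 0 < r) :
    ∀ L K : ℕ, (sEdg K L r).card = L.choose K * r ^ K := by
  intro L
  induction L with
  | zero =>
    intro K
    cases K with
    | zero => simp [sEdg_k0]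
    | succ K =>
      have h0 : sEdg (K+1) 0 r = ∅ := by
        ext e
        simp only [mem_sEdg, Finset.notMem_empty, iff_false]
        rintro ⟨⟨hsub, hcard⟩, -⟩
        rw [Nat.zero_mul, Finset.range_zero, Finset.subset_empty] at hsub
        subst hsub
        simp at hcard
      rw [h0]
      simp [Nat.choose_eq_zero_of_lt (Nat.succ_pos K)]
  | succ L ih =>
    intro K
    cases K with
    | zero => simp [sEdg_k0]
    | succ K =>
      have hsplit := Finset.card_filter_add_card_filter_not
        (s := sEdg (K+1) (L+1) r) (p := fun e => e ⊆ Finset.range (L * r))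
      have hA : (sEdg (K+1) (L+1) r).filter (fun e => e ⊆ Finset.range (L * r))
          = sEdg (K+1) L r := by
        ext e
        simp only [Finset.mem_filter, mem_sEdg]
        constructor
        · rintro ⟨⟨⟨-, hcard⟩, hpred⟩, hsub⟩
          exact ⟨⟨hsub, hcard⟩, hpred⟩
        · rintro ⟨⟨hsub, hcard⟩, hpred⟩
          refine ⟨⟨⟨hsub.trans (Finset.range_subset_range.mpr ?_), hcard⟩, hpred⟩, hsub⟩
          exact Nat.mul_le_mul_right r (Nat.le_succ L)
      have key : ∀ e ∈ (sEdg (K+1) (L+1) r).filter (fun e => ¬ e ⊆ Finset.range (L * r)),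
          e.sup id ∈ e ∧ L * r ≤ e.sup id ∧ e.sup id < L * r + r ∧
            ∀ w ∈ e, w ≠ e.sup id → w < L * r := by
        intro e he
        rw [Finset.mem_filter, mem_sEdg] at he
        obtain ⟨⟨⟨hsub, hcard⟩, hpred⟩, hns⟩ := he
        obtain ⟨w0, hw0e, hw0⟩ := Finset.not_subset.mp hns
        rw [Finset.mem_range, not_lt] at hw0
        have hlt : ∀ w ∈ e, w < L * r + r := by
          intro w hw
          have h := hsub hw
          rw [Finset.mem_range, Nat.succ_mul] at h
          exact h
        obtain ⟨b, hb, hbsup⟩ := Finset.exists_mem_eq_sup e ⟨w0, hw0e⟩ id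
        have hle : ∀ w ∈ e, w ≤ e.sup id := fun w hw => Finset.le_sup (f := id) hw
        have hbz : e.sup id ∈ e := by rw [hbsup]; exact hb
        have h1 : L * r ≤ e.sup id := le_trans hw0 (hle _ hw0e)
        have h2 : e.sup id < L * r + r := hlt _ hbz
        refine ⟨hbz, h1, h2, ?_⟩
        intro w hw hwne
        by_contra hge
        push_neg at hge
        have e1 : w / r = L := Nat.div_eq_of_lt_le (by omega)
          (by rw [Nat.succ_mul]; exact hlt _ hw)
        have e2 : e.sup id / r = L := Nat.div_eq_of_lt_le (by omega)
          (by rw [Nat.succ_mul]; exact h2)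
        exact hwne (hpred w hw _ hbz (by rw [e1, e2]))
      have hBcard : ((sEdg (K+1) (L+1) r).filter (fun e => ¬ e ⊆ Finset.range (L * r))).card
          = ((Finset.range r) ×ˢ sEdg K L r).card := by
        apply Finset.card_bij' (i := fun e _ => (e.sup id - L * r, e.erase (e.sup id)))
          (j := fun p _ => insert (L * r + p.1) p.2)
        · -- left inverse
          intro e he
          obtain ⟨hbz, h1, -, -⟩ := key e he
          rw [Nat.add_sub_cancel' h1, Finset.insert_erase hbz]
        · -- right inverse
          rintro ⟨z, e'⟩ hp
          rw [Finset.mem_product, Finset.mem_range] at hp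
          obtain ⟨hz, he'⟩ := hp
          rw [mem_sEdg] at he'
          have hbound : ∀ w ∈ e', w < L * r := fun w hw => Finset.mem_range.mp (he'.1.1 hw)
          have hsup : (insert (L * r + z) e').sup id = L * r + z := by
            apply le_antisymm
            · apply Finset.sup_le
              intro w hw
              rcases Finset.mem_insert.mp hw with rfl | hw'
              · exact le_refl _
              · have := hbound w hw'
                simp only [id]
                omega
            · exact Finset.le_sup (f := id) (Finset.mem_insert_self _ _)
          have hnm : L * r + z ∉ e' := fun hmem => by have := hbound _ hmem; omega
          rw [hsup]
          simp only [Prod.mk.injEq]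
          exact ⟨by omega, Finset.erase_insert hnm⟩

        · -- hi
          intro e he
          obtain ⟨hbz, h1, h2, h3⟩ := key e he
          rw [Finset.mem_filter, mem_sEdg] at he
          obtain ⟨⟨⟨hsub, hcard⟩, hpred⟩, -⟩ := he
          rw [Finset.mem_product]
          constructor
          · rw [Finset.mem_range]; omega
          · rw [mem_sEdg]
            refine ⟨⟨?_, ?_⟩, ?_⟩
            · intro w hw
              rw [Finset.mem_range]
              obtain ⟨hwne, hwe⟩ := Finset.mem_erase.mp hw
              exact h3 w hwe hwne
            · rw [Finset.card_erase_of_mem hbz, hcard]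
              omega
            · intro x hx y hy
              exact hpred x (Finset.mem_of_mem_erase hx) y (Finset.mem_of_mem_erase hy)
        · -- hj
          rintro ⟨z, e'⟩ hp
          rw [Finset.mem_product, Finset.mem_range] at hp
          obtain ⟨hz, he'⟩ := hp
          rw [mem_sEdg] at he'
          obtain ⟨⟨hsub', hcard'⟩, hpred'⟩ := he'
          have hbound : ∀ w ∈ e', w < L * r := fun w hw => Finset.mem_range.mp (hsub' hw)
          have hnotmem : L * r + z ∉ e' := fun hmem => by have := hbound _ hmem; omega
          have hparts' : ∀ w ∈ e', w / r < L := by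
            intro w hw
            exact (Nat.div_lt_iff_lt_mul hr).mpr (hbound w hw)
          have hnewpart : (L * r + z) / r = L := by
            rw [Nat.add_comm, Nat.add_mul_div_right _ _ hr, Nat.div_eq_of_lt hz, Nat.zero_add]
          rw [Finset.mem_filter, mem_sEdg]
          refine ⟨⟨⟨?_, ?_⟩, ?_⟩, ?_⟩
          · intro w hw
            rcases Finset.mem_insert.mp hw with rfl | hw'
            · rw [Finset.mem_range, Nat.succ_mul]; omega
            · have := hbound w hw'
              rw [Finset.mem_range, Nat.succ_mul]; omega
          · rw [Finset.card_insert_of_notMem hnotmem, hcard']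
          · intro x hx y hy hxy
            rcases Finset.mem_insert.mp hx with rfl | hx' <;>
              rcases Finset.mem_insert.mp hy with rfl | hy'
            · rfl
            · exfalso
              rw [hnewpart] at hxy
              exact absurd hxy.symm (Nat.ne_of_lt (hparts' y hy'))
            · exfalso
              rw [hnewpart] at hxy
              exact absurd hxy (Nat.ne_of_lt (hparts' x hx'))
            · exact hpred' x hx' y hy' hxy
          · intro hs
            have := hs (Finset.mem_insert_self _ _)
            rw [Finset.mem_range] at this
            omega
      have htotal : (sEdg (K+1) (L+1) r).card
          = (sEdg (K+1) L r).card + r * (sEdg K L r).card := by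
        rw [← hsplit, hA, hBcard, Finset.card_product, Finset.card_range]
      rw [htotal, ih, ih, Nat.choose_succ_succ]
      ring

/-- number of edges inside a vertex set `W`. -/
def ew (k ℓ r : ℕ) (W : Finset ℕ) : ℕ := ((sEdg k ℓ r).filter (fun e => e ⊆ W)).card

/-- the maximum number of edges on `m` vertices, as an integer. -/
def EmN (k ℓ r m : ℕ) : ℕ := ((Finset.range (ℓ * r)).powersetCard m).sup (ew k ℓ r)

def Em (k ℓ r m : ℕ) : ℤ := (EmN k ℓ r m : ℤ)

lemma ew_insert {k ℓ r : ℕ} {W : Finset ℕ} {y : ℕ} (hy : y ∉ W) :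
    ew k ℓ r (insert y W)
      = ew k ℓ r W + ((sEdg k ℓ r).filter (fun e => e ⊆ insert y W ∧ y ∈ e)).card := by
  have hsplit := Finset.card_filter_add_card_filter_not
    (s := (sEdg k ℓ r).filter (fun e => e ⊆ insert y W)) (p := fun e => y ∈ e)
  rw [Finset.filter_filter, Finset.filter_filter] at hsplit
  have h1 : (sEdg k ℓ r).filter (fun e => e ⊆ insert y W ∧ ¬ y ∈ e)
      = (sEdg k ℓ r).filter (fun e => e ⊆ W) := by
    apply Finset.filter_congr
    intro e _
    constructor
    · rintro ⟨hsub, hye⟩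
      intro w hw
      rcases Finset.mem_insert.mp (hsub hw) with rfl | h
      · exact absurd hw hye
      · exact h
    · intro hsub
      exact ⟨hsub.trans (Finset.subset_insert _ _), fun hye => hy (hsub hye)⟩
  rw [h1] at hsplit
  unfold ew
  omega

lemma ew_erase {k ℓ r : ℕ} {W : Finset ℕ} {x : ℕ} (hx : x ∈ W) :
    ew k ℓ r W = ew k ℓ r (W.erase x)
      + ((sEdg k ℓ r).filter (fun e => e ⊆ W ∧ x ∈ e)).card := by
  have hsplit := Finset.card_filter_add_card_filter_not
    (s := (sEdg k ℓ r).filter (fun e => e ⊆ W)) (p := fun e => x ∈ e)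
  rw [Finset.filter_filter, Finset.filter_filter] at hsplit
  have h1 : (sEdg k ℓ r).filter (fun e => e ⊆ W ∧ ¬ x ∈ e)
      = (sEdg k ℓ r).filter (fun e => e ⊆ W.erase x) := by
    apply Finset.filter_congr
    intro e _
    rw [Finset.subset_erase]
  rw [h1] at hsplit
  unfold ew
  omega

lemma transfer {k ℓ r : ℕ} (hk : 1 ≤ k) {W : Finset ℕ} {x y : ℕ}
    (hW : W ⊆ Finset.range (ℓ * r)) (hx : x ∈ W) (hyW : y ∉ W)
    (hyV : y ∈ Finset.range (ℓ * r))
    (hcond : y / r = x / r ∨ ∀ w ∈ W, w / r ≠ y / r) :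
    ((sEdg k ℓ r).filter (fun e => e ⊆ W ∧ x ∈ e)).card ≤
    ((sEdg k ℓ r).filter (fun e => e ⊆ insert y W ∧ y ∈ e)).card := by
  apply Finset.card_le_card_of_injOn (fun e => insert y (e.erase x))
  · intro e he
    rw [Finset.mem_coe, Finset.mem_filter, mem_sEdg] at he
    obtain ⟨⟨⟨hsub, hcard⟩, hpred⟩, hsubW, hxe⟩ := he
    have hyne : y ∉ e.erase x := fun h => hyW (hsubW (Finset.mem_of_mem_erase h))
    rw [Finset.mem_coe, Finset.mem_filter, mem_sEdg]
    refine ⟨⟨⟨?_, ?_⟩, ?_⟩, ?_, Finset.mem_insert_self _ _⟩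
    · intro w hw
      rcases Finset.mem_insert.mp hw with rfl | hw'
      · exact hyV
      · exact hsub (Finset.mem_of_mem_erase hw')
    · rw [Finset.card_insert_of_notMem hyne, Finset.card_erase_of_mem hxe, hcard]
      omega
    · have hyb : ∀ b ∈ e.erase x, y / r = b / r → y = b := by
        intro b hb hyb
        exfalso
        obtain ⟨hbx, hbe⟩ := Finset.mem_erase.mp hb
        rcases hcond with hc | hc
        · exact hbx (hpred b hbe x hxe (by rw [← hyb, hc]))
        · exact hc b (hsubW hbe) hyb.symm
      intro a ha b hb hab
      rcases Finset.mem_insert.mp ha with rfl | ha' <;>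
        rcases Finset.mem_insert.mp hb with rfl | hb'
      · rfl
      · exact hyb b hb' hab
      · exact (hyb a ha' hab.symm).symm
      · exact hpred a (Finset.mem_of_mem_erase ha') b (Finset.mem_of_mem_erase hb') hab
    · intro w hw
      rcases Finset.mem_insert.mp hw with rfl | hw'
      · exact Finset.mem_insert_self _ _
      · exact Finset.mem_insert_of_mem (hsubW (Finset.mem_of_mem_erase hw'))
  · intro e1 h1 e2 h2 heq
    simp only [Finset.coe_filter, Set.mem_setOf_eq] at h1 h2
    have hx1 : x ∈ e1 := h1.2.2
    have hx2 : x ∈ e2 := h2.2.2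
    have hy1 : y ∉ e1.erase x := fun h => hyW (h1.2.1 (Finset.mem_of_mem_erase h))
    have hy2 : y ∉ e2.erase x := fun h => hyW (h2.2.1 (Finset.mem_of_mem_erase h))
    have : e1.erase x = e2.erase x := by
      have := congrArg (fun s => Finset.erase s y) heq
      simpa [Finset.erase_insert hy1, Finset.erase_insert hy2] using this
    calc e1 = insert x (e1.erase x) := (Finset.insert_erase hx1).symm
      _ = insert x (e2.erase x) := by rw [this]
      _ = e2 := Finset.insert_erase hx2

lemma le_Em {k ℓ r m : ℕ} {W : Finset ℕ} (hW : W ⊆ Finset.range (ℓ * r))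
    (hc : W.card = m) : (ew k ℓ r W : ℤ) ≤ Em k ℓ r m := by
  have h : ew k ℓ r W ≤ EmN k ℓ r m :=
    Finset.le_sup (f := ew k ℓ r) (Finset.mem_powersetCard.mpr ⟨hW, hc⟩)
  rw [Em]
  exact_mod_cast h

lemma Em_attain (k ℓ r m : ℕ) (hm : m ≤ ℓ * r) :
    ∃ W : Finset ℕ, W ⊆ Finset.range (ℓ * r) ∧ W.card = m ∧
      (ew k ℓ r W : ℤ) = Em k ℓ r m := by
  have hne : ((Finset.range (ℓ * r)).powersetCard m).Nonempty :=
    Finset.powersetCard_nonempty.mpr (by rw [Finset.card_range]; exact hm)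
  obtain ⟨W, hW, hsup⟩ := Finset.exists_mem_eq_sup _ hne (ew k ℓ r)
  rw [Finset.mem_powersetCard] at hW
  refine ⟨W, hW.1, hW.2, ?_⟩
  rw [Em]
  exact_mod_cast congrArg (fun n : ℕ => (n : ℤ)) hsup.symm

lemma Em_top (k ℓ r : ℕ) : Em k ℓ r (ℓ * r) = ((sEdg k ℓ r).card : ℤ) := by
  have h1 := Finset.powersetCard_self (Finset.range (ℓ * r))
  rw [Finset.card_range] at h1
  have h2 : ew k ℓ r (Finset.range (ℓ * r)) = (sEdg k ℓ r).card := by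
    unfold ew
    rw [Finset.filter_true_of_mem]
    intro e he
    exact (mem_sEdg.mp he).1.1
  rw [Em, EmN, h1, Finset.sup_singleton, h2]

lemma conv (k ℓ r : ℕ) (hk : 1 ≤ k) {m : ℕ} (hm2 : m + 2 ≤ ℓ * r) :
    2 * Em k ℓ r (m + 1) ≤ Em k ℓ r m + Em k ℓ r (m + 2) := by
  obtain ⟨W, hWsub, hWcard, hWew⟩ := Em_attain k ℓ r (m + 1) (by omega)
  have hWne : W.Nonempty := Finset.card_pos.mp (by omega)
  obtain ⟨x0, hx0⟩ := hWne
  have hnsub : ¬ Finset.range (ℓ * r) ⊆ W := by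
    intro h
    have := Finset.card_le_card h
    rw [Finset.card_range] at this
    omega
  obtain ⟨y0, hy0V, hy0W⟩ := Finset.not_subset.mp hnsub
  have main : ∀ x y : ℕ, x ∈ W → y ∉ W → y ∈ Finset.range (ℓ * r) →
      (y / r = x / r ∨ ∀ w ∈ W, w / r ≠ y / r) →
      2 * Em k ℓ r (m + 1) ≤ Em k ℓ r m + Em k ℓ r (m + 2) := by
    intro x y hx hyW hyV hcond
    have htrans := transfer (ℓ := ℓ) hk hWsub hx hyW hyV hcond
    have h1 := ew_insert (k := k) (ℓ := ℓ) (r := r) (W := W) hyW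
    have h2 := ew_erase (k := k) (ℓ := ℓ) (r := r) hx
    have hup : (ew k ℓ r (insert y W) : ℤ) ≤ Em k ℓ r (m + 2) := by
      apply le_Em
      · intro w hw
        rcases Finset.mem_insert.mp hw with rfl | hw'
        · exact hyV
        · exact hWsub hw'
      · rw [Finset.card_insert_of_notMem hyW, hWcard]
    have hdown : (ew k ℓ r (W.erase x) : ℤ) ≤ Em k ℓ r m := by
      apply le_Em
      · exact fun w hw => hWsub (Finset.mem_of_mem_erase hw)
      · rw [Finset.card_erase_of_mem hx, hWcard]
        omega
    rw [← hWew]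
    have hcast1 : (ew k ℓ r (insert y W) : ℤ)
        = (ew k ℓ r W : ℤ)
          + (((sEdg k ℓ r).filter (fun e => e ⊆ insert y W ∧ y ∈ e)).card : ℤ) := by
      exact_mod_cast h1
    have hcast2 : (ew k ℓ r W : ℤ)
        = (ew k ℓ r (W.erase x) : ℤ)
          + (((sEdg k ℓ r).filter (fun e => e ⊆ W ∧ x ∈ e)).card : ℤ) := by
      exact_mod_cast h2
    have htrans' : (((sEdg k ℓ r).filter (fun e => e ⊆ W ∧ x ∈ e)).card : ℤ)
        ≤ (((sEdg k ℓ r).filter (fun e => e ⊆ insert y W ∧ y ∈ e)).card : ℤ) := by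
      exact_mod_cast htrans
    linarith
  by_cases hc : ∃ y ∈ Finset.range (ℓ * r), y ∉ W ∧ ∃ x ∈ W, y / r = x / r
  · obtain ⟨y, hyV, hyW, x, hx, hxy⟩ := hc
    exact main x y hx hyW hyV (Or.inl hxy)
  · push_neg at hc
    refine main x0 y0 hx0 hy0W hy0V (Or.inr ?_)
    intro w hw hwheq
    exact hc y0 hy0V hy0W w hw hwheq.symm

lemma Dmono (k ℓ r : ℕ) (hk : 1 ≤ k) :
    ∀ i j : ℕ, i ≤ j → j + 1 ≤ ℓ * r →
      Em k ℓ r (i + 1) - Em k ℓ r i ≤ Em k ℓ r (j + 1) - Em k ℓ r j := by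
  intro i j hij
  induction j, hij using Nat.le_induction with
  | base => intro _; exact le_refl _
  | succ j hij ih =>
    intro hj
    have h1 := ih (by omega)
    have h2 := conv k ℓ r hk (m := j) (by omega)
    have h3 : j + 1 + 1 = j + 2 := rfl
    rw [h3]
    linarith

lemma telescope (f : ℕ → ℤ) :
    ∀ a b : ℕ, a ≤ b → (∑ j ∈ Finset.Ico a b, (f (j + 1) - f j)) = f b - f a := by
  intro a b hab
  induction b, hab using Nat.le_induction with
  | base => simp
  | succ b hab ih =>
    rw [Finset.sum_Ico_succ_top hab, ih]
    ring

lemma chord (k ℓ r : ℕ) (hk : 1 ≤ k) {m : ℕ} (h1 : k + 1 ≤ m) (h2 : m + 1 ≤ ℓ * r) :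
    (((ℓ * r : ℕ) : ℤ) - (k : ℤ) - 1) * (Em k ℓ r m - Em k ℓ r (k + 1))
      ≤ ((m : ℤ) - k - 1) * (Em k ℓ r (ℓ * r) - Em k ℓ r (k + 1)) := by
  have hA : Em k ℓ r m - Em k ℓ r (k + 1)
      = ∑ j ∈ Finset.Ico (k + 1) m, (Em k ℓ r (j + 1) - Em k ℓ r j) :=
    (telescope (Em k ℓ r) (k + 1) m (by omega)).symm
  have hAB : Em k ℓ r (ℓ * r) - Em k ℓ r (k + 1)
      = ∑ j ∈ Finset.Ico (k + 1) (ℓ * r), (Em k ℓ r (j + 1) - Em k ℓ r j) :=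
    (telescope (Em k ℓ r) (k + 1) (ℓ * r) (by omega)).symm
  have hsplitsum :
      ∑ j ∈ Finset.Ico (k + 1) m, (Em k ℓ r (j + 1) - Em k ℓ r j)
        + ∑ j ∈ Finset.Ico m (ℓ * r), (Em k ℓ r (j + 1) - Em k ℓ r j)
      = ∑ j ∈ Finset.Ico (k + 1) (ℓ * r), (Em k ℓ r (j + 1) - Em k ℓ r j) :=
    Finset.sum_Ico_consecutive _ (by omega) (by omega)
  rcases Nat.eq_or_lt_of_le h1 with heq | hlt
  · rw [← heq]
    simp
  · obtain ⟨m', rfl⟩ : ∃ m', m = m' + 1 := ⟨m - 1, by omega⟩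
    have hAle : ∑ j ∈ Finset.Ico (k + 1) (m' + 1), (Em k ℓ r (j + 1) - Em k ℓ r j)
        ≤ ((m' + 1 - (k + 1) : ℕ)) • (Em k ℓ r (m' + 1) - Em k ℓ r m') := by
      rw [← Nat.card_Ico (k + 1) (m' + 1)]
      apply Finset.sum_le_card_nsmul
      intro j hj
      rw [Finset.mem_Ico] at hj
      exact Dmono k ℓ r hk j m' (by omega) (by omega)
    have hBge : ((ℓ * r - (m' + 1) : ℕ)) • (Em k ℓ r (m' + 1) - Em k ℓ r m')
        ≤ ∑ j ∈ Finset.Ico (m' + 1) (ℓ * r), (Em k ℓ r (j + 1) - Em k ℓ r j) := by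
      rw [← Nat.card_Ico (m' + 1) (ℓ * r)]
      apply Finset.card_nsmul_le_sum
      intro j hj
      rw [Finset.mem_Ico] at hj
      exact Dmono k ℓ r hk m' j (by omega) (by omega)
    rw [hA, hAB, ← hsplitsum]
    set A : ℤ := ∑ j ∈ Finset.Ico (k + 1) (m' + 1), (Em k ℓ r (j + 1) - Em k ℓ r j) with hAdef
    set B : ℤ := ∑ j ∈ Finset.Ico (m' + 1) (ℓ * r), (Em k ℓ r (j + 1) - Em k ℓ r j) with hBdef
    set c : ℤ := Em k ℓ r (m' + 1) - Em k ℓ r m' with hcdef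
    rw [nsmul_eq_mul] at hAle hBge
    have hcp : ((m' + 1 - (k + 1) : ℕ) : ℤ) = ((m' + 1 : ℕ) : ℤ) - k - 1 := by
      omega
    have hcq : ((ℓ * r - (m' + 1) : ℕ) : ℤ) = ((ℓ * r : ℕ) : ℤ) - ((m' + 1 : ℕ) : ℤ) := by
      omega
    rw [hcp] at hAle
    rw [hcq] at hBge
    set P : ℤ := ((m' + 1 : ℕ) : ℤ) - k - 1 with hPdef
    set Q : ℤ := ((ℓ * r : ℕ) : ℤ) - ((m' + 1 : ℕ) : ℤ) with hQdef
    have hP0 : 0 ≤ P := by rw [hPdef]; push_cast; omega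
    have hQ0 : 0 ≤ Q := by rw [hQdef]; push_cast; omega
    have hqA : Q * A ≤ Q * (P * c) := mul_le_mul_of_nonneg_left hAle hQ0
    have hpB : P * (Q * c) ≤ P * B := mul_le_mul_of_nonneg_left hBge hP0
    have hvk : ((ℓ * r : ℕ) : ℤ) - (k : ℤ) - 1 = P + Q := by
      rw [hPdef, hQdef]; push_cast; ring
    rw [hvk]
    nlinarith [hqA, hpB]

lemma ew_le_succ (k ℓ r : ℕ) {W : Finset ℕ} (hc : W.card = k + 1) :
    ew k ℓ r W ≤ k + 1 := by
  have hsub : (sEdg k ℓ r).filter (fun e => e ⊆ W) ⊆ W.powersetCard k := by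
    intro e he
    rw [Finset.mem_filter, mem_sEdg] at he
    exact Finset.mem_powersetCard.mpr ⟨he.2, he.1.1.2⟩
  calc ew k ℓ r W ≤ (W.powersetCard k).card := Finset.card_le_card hsub
    _ = (k + 1).choose k := by rw [Finset.card_powersetCard, hc]
    _ = k + 1 := by
        have := Nat.choose_succ_self_right k
        omega
  
lemma ew_le_two (k r : ℕ) (hr : 0 < r) {W : Finset ℕ}
    (hW : W ⊆ Finset.range (k * r)) (hc : W.card = k + 1) :
    ew k k r W ≤ 2 := by
  have hmap : ∀ w ∈ W, w / r ∈ Finset.range k := by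
    intro w hw
    have h := hW hw
    rw [Finset.mem_range] at h ⊢
    have h' : w < r * k := by rw [Nat.mul_comm] at h; exact h
    exact Nat.div_lt_of_lt_mul h'
  obtain ⟨x, hx, x', hx', hne, heq⟩ := Finset.exists_ne_map_eq_of_card_lt_of_maps_to
    (by rw [hc, Finset.card_range]; omega) hmap
  have hsub : (sEdg k k r).filter (fun e => e ⊆ W) ⊆ {W.erase x, W.erase x'} := by
    intro e he
    rw [Finset.mem_filter, mem_sEdg] at he
    obtain ⟨⟨⟨-, hcard⟩, hpred⟩, hsubW⟩ := he
    have hxx : ¬ (x ∈ e ∧ x' ∈ e) := by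
      rintro ⟨h1, h2⟩
      exact hne (hpred x h1 x' h2 heq)
    simp only [Finset.mem_insert, Finset.mem_singleton]
    by_cases hxe : x ∈ e
    · right
      have hsube : e ⊆ W.erase x' :=
        Finset.subset_erase.mpr ⟨hsubW, fun h => hxx ⟨hxe, h⟩⟩
      apply Finset.eq_of_subset_of_card_le hsube
      rw [Finset.card_erase_of_mem hx', hc, hcard]
      omega
    · left
      have hsube : e ⊆ W.erase x :=
        Finset.subset_erase.mpr ⟨hsubW, hxe⟩
      apply Finset.eq_of_subset_of_card_le hsube
      rw [Finset.card_erase_of_mem hx, hc, hcard]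
      omega
  calc ew k k r W ≤ ({W.erase x, W.erase x'} : Finset (Finset ℕ)).card :=
        Finset.card_le_card hsub
    _ ≤ 2 := Finset.card_le_two

lemma arith_eq (k : ℕ) (hk : 2 ≤ k) (R : ℤ) (hR : 2 ≤ R) :
    2 * ((k : ℤ) * R - k) ≤ R ^ k := by
  induction k, hk using Nat.le_induction with
  | base =>
    push_cast
    nlinarith [sq_nonneg (R - 2)]
  | succ K hK ih =>
    have hpow : (0 : ℤ) ≤ R ^ K := by positivity
    have hRK : R ^ (K + 1) = R * R ^ K := by ring
    have hK1 : (1 : ℤ) ≤ (K : ℤ) := by exact_mod_cast Nat.one_le_iff_ne_zero.mpr (by omega)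
    push_cast
    push_cast at ih
    nlinarith [mul_nonneg (sub_nonneg.mpr hK1) (sub_nonneg.mpr (show (1:ℤ) ≤ R by omega)),
      mul_nonneg (sub_nonneg.mpr hR) hpow]

lemma arith_pow (k : ℕ) (hk : 2 ≤ k) (R : ℤ) (hR : 2 ≤ R) :
    ((k : ℤ) + 1) * (R - 1) + 1 ≤ R ^ k := by
  induction k, hk using Nat.le_induction with
  | base =>
    push_cast
    nlinarith [mul_nonneg (sub_nonneg.mpr (show (1:ℤ) ≤ R by omega))
      (sub_nonneg.mpr hR)]
  | succ K hK ih =>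
    have hpow : (0 : ℤ) ≤ R ^ K := by positivity
    have hK1 : (1 : ℤ) ≤ (K : ℤ) := by exact_mod_cast Nat.one_le_iff_ne_zero.mpr (by omega)
    have hR1 : (0 : ℤ) ≤ R - 1 := by omega
    have hmul : (R - 1) * (((K : ℤ) + 1) * (R - 1) + 1) ≤ (R - 1) * R ^ K :=
      mul_le_mul_of_nonneg_left ih hR1
    push_cast
    push_cast at ih hmul
    rw [pow_succ]
    nlinarith [hmul, mul_nonneg (mul_nonneg (by positivity : (0:ℤ) ≤ (K:ℤ)+1) hR1) hR1]

lemma arith_choose (k r : ℕ) (hk : 2 ≤ k) (hr : 2 ≤ r) :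
    ∀ ℓ : ℕ, k + 1 ≤ ℓ →
      ((k : ℤ) + 1) * ((ℓ : ℤ) * r - k) ≤ (ℓ.choose k : ℤ) * (r : ℤ) ^ k := by
  intro ℓ hℓ
  induction ℓ, hℓ using Nat.le_induction with
  | base =>
    have h := arith_pow k hk (r : ℤ) (by exact_mod_cast hr)
    have hk0 : (0 : ℤ) ≤ (k : ℤ) + 1 := by positivity
    have hlin : ((k : ℤ) + 1) * (r : ℤ) - k ≤ (r : ℤ) ^ k := by linarith
    have hch : (((k + 1 : ℕ)).choose k : ℤ) = (k : ℤ) + 1 := by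
      exact_mod_cast congrArg (fun n : ℕ => (n : ℤ)) (Nat.choose_succ_self_right k)
    rw [hch]
    push_cast
    nlinarith [mul_le_mul_of_nonneg_left hlin hk0]
  | succ L hL ih =>
    obtain ⟨k', rfl⟩ : ∃ k', k = k' + 1 := ⟨k - 1, by omega⟩
    have hchoose : ((L + 1).choose (k' + 1) : ℤ)
        = (L.choose k' : ℤ) + (L.choose (k' + 1) : ℤ) := by
      exact_mod_cast congrArg (fun n : ℕ => (n : ℤ)) (Nat.choose_succ_succ L k')
    have hclN : (k' + 2 : ℕ) ≤ L.choose k' := by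
      have h1 : (k' + 2).choose k' ≤ L.choose k' := Nat.choose_le_choose k' (by omega)
      have h2 : (k' + 2).choose k' = (k' + 2).choose 2 := by
        have := Nat.choose_symm (show 2 ≤ k' + 2 by omega) (n := k' + 2)
        simpa using this
      have h3 : (k' + 2).choose 2 = (k' + 2) * (k' + 1) / 2 := by
        rw [Nat.choose_two_right]
        simp
      have h4 : k' + 2 ≤ (k' + 2) * (k' + 1) / 2 := by
        rw [Nat.le_div_iff_mul_le (by norm_num)]
        have : 1 ≤ k' := by omega
        nlinarith
      omega
    have hclZ : ((k' : ℤ) + 2) ≤ (L.choose k' : ℤ) := by exact_mod_cast hclN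
    have hrZ : (2 : ℤ) ≤ (r : ℤ) := by exact_mod_cast hr
    have hrpow : (r : ℤ) ≤ (r : ℤ) ^ (k' + 1) := by
      calc (r : ℤ) = (r : ℤ) ^ 1 := by ring
        _ ≤ (r : ℤ) ^ (k' + 1) := by
            apply pow_le_pow_right₀ (by omega) (by omega)
    have hextra : ((k' : ℤ) + 2) * (r : ℤ) ≤ (L.choose k' : ℤ) * (r : ℤ) ^ (k' + 1) := by
      have h1 : ((k' : ℤ) + 2) * (r : ℤ) ≤ (L.choose k' : ℤ) * (r : ℤ) :=
        mul_le_mul_of_nonneg_right hclZ (by positivity)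
      have h2 : (L.choose k' : ℤ) * (r : ℤ) ≤ (L.choose k' : ℤ) * (r : ℤ) ^ (k' + 1) :=
        mul_le_mul_of_nonneg_left hrpow (by positivity)
      linarith
    rw [hchoose]
    push_cast
    push_cast at ih
    nlinarith [hextra, ih]

set_option maxHeartbeats 1600000 in
lemma main_ineq (k ℓ r : ℕ) (hk : 2 ≤ k) (hkl : k ≤ ℓ) (hr : 2 ≤ r) {m m' : ℕ}
    (hm1 : k + 1 ≤ m) (hm2 : m + 1 ≤ ℓ * r) (hm' : (m' : ℤ) ≤ Em k ℓ r m) :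
    ((m' : ℤ) - 1) * (((ℓ * r : ℕ) : ℤ) - k) < (((sEdg k ℓ r).card : ℤ) - 1) * ((m : ℤ) - k) := by
  set v : ℤ := ((ℓ * r : ℕ) : ℤ) with hvdef
  set h : ℤ := ((sEdg k ℓ r).card : ℤ) with hhdef
  set E0 : ℤ := Em k ℓ r (k + 1) with hE0def
  have hvkk : (k : ℤ) * 2 ≤ v := by
    rw [hvdef]
    exact_mod_cast Nat.mul_le_mul hkl hr
  have hk2 : (2 : ℤ) ≤ (k : ℤ) := by exact_mod_cast hk
  have hvk1 : (0 : ℤ) < v - k - 1 := by linarith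
  have hvk0 : (0 : ℤ) ≤ v - k := by linarith
  have hvm : (1 : ℤ) ≤ v - m := by
    rw [hvdef]
    have : (m : ℤ) + 1 ≤ ((ℓ * r : ℕ) : ℤ) := by exact_mod_cast hm2
    linarith
  have htop : Em k ℓ r (ℓ * r) = h := Em_top k ℓ r
  have hchord := chord k ℓ r (by omega) hm1 hm2
  rw [htop] at hchord
  -- E0 bound and h lower bound
  have hEC : E0 ≤ ((if ℓ = k then 2 else k + 1 : ℕ) : ℤ) ∧
      (v - k) * ((if ℓ = k then 2 else k + 1 : ℕ) : ℤ) ≤ h := by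
    obtain ⟨W, hWsub, hWcard, hWew⟩ := Em_attain k ℓ r (k + 1) (by omega)
    constructor
    · rw [hE0def, ← hWew]
      split_ifs with hlk
      · rw [hlk] at hWsub
        rw [hlk]
        exact_mod_cast ew_le_two k r (by omega) hWsub hWcard
      · exact_mod_cast ew_le_succ k ℓ r hWcard
    · split_ifs with hlk
      · rw [hhdef, hvdef, hlk, card_sEdg r (by omega) k k, Nat.choose_self, Nat.one_mul]
        have := arith_eq k hk (r : ℤ) (by exact_mod_cast hr)
        push_cast
        push_cast at this
        linarith
      · rw [hhdef, hvdef, card_sEdg r (by omega) ℓ k]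
        have := arith_choose k r hk hr ℓ (by omega)
        push_cast
        push_cast at this
        linarith
  obtain ⟨hE0le, hCle⟩ := hEC
  set B0 : ℤ := ((if ℓ = k then 2 else k + 1 : ℕ) : ℤ)
  have hE0' : (v - k) * E0 ≤ h :=
    le_trans (mul_le_mul_of_nonneg_left hE0le hvk0) hCle
  -- step 1 : (v - m) * (h - E0) ≤ (v - k - 1) * (h - Em m)
  have g1 : (v - m) * (h - E0) ≤ (v - k - 1) * (h - Em k ℓ r m) := by linarith [hchord]
  -- step 2
  have s2 : (v - k) * ((v - m) * (h - E0)) ≤ (v - k) * ((v - k - 1) * (h - Em k ℓ r m)) :=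
    mul_le_mul_of_nonneg_left g1 hvk0
  have s3inner : (v - k - 1) * h ≤ (v - k) * (h - E0) := by linarith [hE0']
  have s3 : (v - m) * ((v - k - 1) * h) ≤ (v - m) * ((v - k) * (h - E0)) :=
    mul_le_mul_of_nonneg_left s3inner (by linarith)
  have hmul : (v - k - 1) * ((v - m) * h) ≤ (v - k - 1) * ((v - k) * (h - Em k ℓ r m)) := by
    linarith [s2, s3]
  have g2 : (v - m) * h ≤ (v - k) * (h - Em k ℓ r m) := le_of_mul_le_mul_left hmul hvk1
  have s5 : (v - k) * (h - Em k ℓ r m) ≤ (v - k) * (h - (m' : ℤ)) :=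
    mul_le_mul_of_nonneg_left (by linarith) hvk0
  linarith [g2, s5, hvm]


lemma hg_ext {k : ℕ} {F G : UHypergraph k} (h1 : F.verts = G.verts)
    (h2 : F.edges = G.edges) : F = G := by
  cases F; cases G
  cases h1; cases h2
  rfl

end Stmt7Aux

/-- Balanced complete ℓ-partite k-uniform hypergraphs are
strictly k-balanced. The parts are `{j*r, …, j*r + r - 1}` for `j < ℓ`, i.e. the
part of a vertex `x` is `x / r`; a k-set is a hyperedge iff it has at most one
vertex in each part. -/
theorem stmt_7 (k ℓ r : ℕ) (hk : 2 ≤ k) (hℓ : k ≤ ℓ) (hr : 2 ≤ r) (F : UHypergraph k)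
    (hverts : F.verts = Finset.range (ℓ * r))
    (hedges : F.edges = ((Finset.range (ℓ * r)).powersetCard k).filter
      (fun e => ∀ x ∈ e, ∀ y ∈ e, x / r = y / r → x = y)) :
    F.StrictlyBalanced := by
  classical
  have hvcard : F.verts.card = ℓ * r := by rw [hverts, Finset.card_range]
  have hedg : F.edges = Stmt7Aux.sEdg k ℓ r := by
    unfold Stmt7Aux.sEdg
    convert hedges using 2
  have hkv : k + 1 ≤ ℓ * r := by
    have := Nat.mul_le_mul hℓ hr
    omega
  constructor
  · rw [hvcard]; exact hkv
  · intro F' hsub hne hm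
    have hW : F'.verts ⊆ Finset.range (ℓ * r) := by rw [← hverts]; exact hsub.1
    have hmle : F'.verts.card ≤ ℓ * r := by
      have := Finset.card_le_card hW
      rwa [Finset.card_range] at this
    have hmk : k + 1 ≤ F'.verts.card := hm
    have hpos1 : (0:ℝ) < (F'.verts.card : ℝ) - k := by
      have : (k:ℝ) + 1 ≤ (F'.verts.card : ℝ) := by exact_mod_cast hmk
      linarith
    have hpos2 : (0:ℝ) < (F.verts.card : ℝ) - k := by
      rw [hvcard]
      have : (k:ℝ) + 1 ≤ ((ℓ * r : ℕ) : ℝ) := by exact_mod_cast hkv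
      linarith
    rw [div_lt_div_iff₀ hpos1 hpos2]
    have hZ : ((F'.edges.card : ℤ) - 1) * (((ℓ * r : ℕ) : ℤ) - k)
        < ((F.edges.card : ℤ) - 1) * ((F'.verts.card : ℤ) - k) := by
      by_cases hfull : F'.verts.card = ℓ * r
      · have hWeq : F'.verts = Finset.range (ℓ * r) :=
          Finset.eq_of_subset_of_card_le hW (by rw [Finset.card_range, hfull])
        have hEne : F'.edges ≠ F.edges := by
          intro hEe
          exact hne (Stmt7Aux.hg_ext (by rw [hWeq, hverts]) hEe)
        have hlt : F'.edges.card < F.edges.card :=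
          Finset.card_lt_card (Finset.ssubset_iff_subset_ne.mpr ⟨hsub.2, hEne⟩)
        have hvk : (0:ℤ) < ((ℓ * r : ℕ) : ℤ) - k := by
          have : (k:ℤ) + 1 ≤ ((ℓ * r : ℕ) : ℤ) := by exact_mod_cast hkv
          linarith
        rw [hfull]
        apply mul_lt_mul_of_pos_right _ hvk
        have : (F'.edges.card : ℤ) < (F.edges.card : ℤ) := by exact_mod_cast hlt
        linarith
      · have hm2 : F'.verts.card + 1 ≤ ℓ * r := by omega
        have hm' : ((F'.edges.card : ℕ) : ℤ) ≤ Stmt7Aux.Em k ℓ r F'.verts.card := by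
          have hsubf : F'.edges ⊆ (Stmt7Aux.sEdg k ℓ r).filter (fun e => e ⊆ F'.verts) := by
            intro e he
            rw [Finset.mem_filter]
            refine ⟨?_, F'.edge_sub e he⟩
            rw [← hedg]
            exact hsub.2 he
          calc ((F'.edges.card : ℕ) : ℤ)
              ≤ ((Stmt7Aux.ew k ℓ r F'.verts : ℕ) : ℤ) := by
                have := Finset.card_le_card hsubf
                exact_mod_cast this
            _ ≤ _ := Stmt7Aux.le_Em hW rfl
        have hmain := Stmt7Aux.main_ineq k ℓ r hk hℓ hr hmk hm2 hm'
        rw [hedg]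
        exact hmain
    rw [hvcard]
    exact_mod_cast hZ
end
end

section
/- Let k ≥ 2, 1 ≤ ℓ < k and h ≥ 2 be integers with h(k−ℓ) ≥ k+1, and let C_{ℓ,h} be the k-uniform ℓ-cycle of length h. Then C_{ℓ,h} is strictly k-balanced. -/
open MeasureTheory Finset Filter

noncomputable section
attribute [local instance] Classical.propDecidable

variable {k : ℕ} {V : Type*} [DecidableEq V]

private lemma aux_div_block {K : ℕ} (hK : 0 < K) (i t : ℕ) (ht : t < K) :
    (i * K + t) / K = i := by
  rw [add_comm, Nat.add_mul_div_right _ _ hK, Nat.div_eq_of_lt ht, zero_add]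

private lemma aux_mod_block {H K : ℕ} (hK : 0 < K) (hH : 0 < H) (a r : ℕ) (hr : r < K) :
    (a * K + r) % (H * K) = a % H * K + r := by
  have h0 : a * K + r = a % H * K + r + a / H * (H * K) := by
    conv_lhs => rw [← Nat.mod_add_div a H]
    ring
  rw [h0, Nat.add_mul_mod_self_right]
  apply Nat.mod_eq_of_lt
  have h1 : a % H < H := Nat.mod_lt _ hH
  have h2 : (a % H + 1) * K ≤ H * K := Nat.mul_le_mul_right _ h1
  have h3 : (a % H + 1) * K = a % H * K + K := by ring
  linarith

private lemma aux_hyper_ext {k : ℕ} {F G : UHypergraph k}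
    (h1 : F.verts = G.verts) (h2 : F.edges = G.edges) : F = G := by
  cases F; cases G; simp_all

/-- The k-uniform ℓ-cycle of length h is strictly k-balanced.
Its vertices are `0, …, h(k-ℓ)-1` in cyclic order and its hyperedges are
`e_i = {i(k-ℓ), …, i(k-ℓ)+k-1}` (indices mod `h(k-ℓ)`), for `i < h`. -/
theorem stmt_8 (k ℓ h : ℕ) (hk : 2 ≤ k) (hℓ1 : 1 ≤ ℓ) (hℓk : ℓ < k) (hh : 2 ≤ h)
    (hv : k + 1 ≤ h * (k - ℓ)) (C : UHypergraph k)
    (hverts : C.verts = Finset.range (h * (k - ℓ)))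
    (hedges : C.edges = (Finset.range h).image
      (fun i => (Finset.range k).image (fun j => (i * (k - ℓ) + j) % (h * (k - ℓ))))) :
    C.StrictlyBalanced := by
  have hK : 0 < k - ℓ := by omega
  set K := k - ℓ with hKdef
  set v := h * K with hvdef
  have hv' : k + 1 ≤ v := hv
  have hvpos : 0 < v := by omega
  have hkK : k = K + ℓ := by omega
  set eF : ℕ → Finset ℕ := fun i => (Finset.range k).image (fun j => (i * K + j) % v) with heF
  have hedges' : C.edges = (Finset.range h).image eF := hedges
  have mem_eF : ∀ i x, x ∈ eF i ↔ ∃ j, j < k ∧ (i * K + j) % v = x := by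
    intro i x
    simp only [heF, Finset.mem_image, Finset.mem_range]
  have hblock : ∀ i, i < h → ∀ t, t < K → i * K + t ∈ eF i := by
    intro i hi t ht
    have h1 : (i + 1) * K ≤ h * K := Nat.mul_le_mul_right _ (by omega)
    have h2 : (i + 1) * K = i * K + K := by ring
    have hlt : i * K + t < v := by rw [hvdef]; linarith
    exact (mem_eF i _).2 ⟨t, by omega, Nat.mod_eq_of_lt hlt⟩
  have start_mem : ∀ i, i < h → i * K ∈ eF i := by
    intro i hi
    simpa using hblock i hi 0 hK
  have pred_not_mem : ∀ i, (i * K + (v - 1)) % v ∉ eF i := by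
    intro i hmem
    obtain ⟨j, hj, hje⟩ := (mem_eF i _).1 hmem
    have h1 : j ≡ v - 1 [MOD v] := Nat.ModEq.add_left_cancel' (i * K) hje
    have h2 : j = v - 1 := by
      rwa [Nat.ModEq, Nat.mod_eq_of_lt (by omega), Nat.mod_eq_of_lt (by omega)] at h1
    omega
  have eF_inj : ∀ i j, i < h → j < h → eF i = eF j → i = j := by
    intro i j hi hj hij
    have h1 : i * K ∈ eF j := hij ▸ start_mem i hi
    obtain ⟨a, ha, haeq⟩ := (mem_eF j _).1 h1
    rcases Nat.eq_zero_or_pos a with rfl | hapos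
    · have h2 : (j + 1) * K ≤ h * K := Nat.mul_le_mul_right _ (by omega)
      have h3 : (j + 1) * K = j * K + K := by ring
      have hjlt : j * K + 0 < v := by rw [hvdef]; linarith
      rw [Nat.mod_eq_of_lt hjlt] at haeq
      exact (Nat.eq_of_mul_eq_mul_right hK (by omega : j * K = i * K)).symm
    · exfalso
      apply pred_not_mem i
      rw [hij]
      have h4 : j * K + (a - 1) + v = j * K + a + (v - 1) := by omega
      have he2 : (j * K + (a - 1)) % v = (i * K + (v - 1)) % v := by
        calc (j * K + (a - 1)) % v = (j * K + (a - 1) + v) % v := (Nat.add_mod_right _ _).symm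
          _ = (j * K + a + (v - 1)) % v := by rw [h4]
          _ = ((j * K + a) % v + (v - 1)) % v := by rw [Nat.mod_add_mod]
          _ = (i * K + (v - 1)) % v := by rw [haeq]
      rw [← he2]
      exact (mem_eF j _).2 ⟨a - 1, by omega, rfl⟩
  have hCedges : C.edges.card = h := by
    rw [hedges', Finset.card_image_of_injOn, Finset.card_range]
    intro a ha b hb hab
    exact eF_inj a b (by simpa using ha) (by simpa using hb) hab
  have hCverts : C.verts.card = v := by rw [hverts, Finset.card_range]
  constructor
  · rw [hCverts]; exact hv'
  intro F' hsub hne hcard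
  rw [hCedges, hCverts]
  set S := (Finset.range h).filter (fun i => eF i ∈ F'.edges) with hSdef
  have hSh : ∀ i ∈ S, i < h := fun i hi => Finset.mem_range.1 (Finset.mem_filter.1 hi).1
  have hSe : ∀ i ∈ S, eF i ∈ F'.edges := fun i hi => (Finset.mem_filter.1 hi).2
  have hedgesS : F'.edges = S.image eF := by
    apply Finset.Subset.antisymm
    · intro e he
      have h1 : e ∈ C.edges := hsub.2 he
      rw [hedges'] at h1
      obtain ⟨i, hi, rfl⟩ := Finset.mem_image.1 h1
      exact Finset.mem_image_of_mem _ (Finset.mem_filter.2 ⟨hi, he⟩)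
    · intro e he
      obtain ⟨i, hi, rfl⟩ := Finset.mem_image.1 he
      exact hSe i hi
  have hm_le : F'.edges.card ≤ S.card := by
    rw [hedgesS]; exact Finset.card_image_le
  have hSh' : S.card ≤ h := by
    calc S.card ≤ (Finset.range h).card := Finset.card_le_card (Finset.filter_subset _ _)
      _ = h := Finset.card_range h
  have vert_of : ∀ i ∈ S, ∀ x ∈ eF i, x ∈ F'.verts := fun i hi x hx =>
    F'.edge_sub _ (hSe i hi) hx
  have hden1 : (0:ℝ) < (F'.verts.card : ℝ) - k := by
    have h1 : (k:ℝ) + 1 ≤ (F'.verts.card : ℝ) := by exact_mod_cast hcard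
    linarith
  have hden2 : (0:ℝ) < (v : ℝ) - k := by
    have h1 : (k:ℝ) + 1 ≤ (v : ℝ) := by exact_mod_cast hv'
    linarith
  by_cases hm1 : F'.edges.card ≤ 1
  · have hnum : ((F'.edges.card : ℝ) - 1) ≤ 0 := by
      have h1 : (F'.edges.card : ℝ) ≤ 1 := by exact_mod_cast hm1
      linarith
    have hL : ((F'.edges.card : ℝ) - 1) / ((F'.verts.card : ℝ) - k) ≤ 0 :=
      div_nonpos_of_nonpos_of_nonneg hnum hden1.le
    have hR : (0:ℝ) < ((h:ℝ) - 1) / ((v:ℝ) - k) := by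
      apply div_pos _ hden2
      have h1 : (2:ℝ) ≤ (h:ℝ) := by exact_mod_cast hh
      linarith
    linarith
  push_neg at hm1
  have hm2 : 2 ≤ F'.edges.card := hm1
  have hS2 : 2 ≤ S.card := le_trans hm2 hm_le
  have hSne : S.Nonempty := Finset.card_pos.1 (by omega)
  have cover_of_mem : ∀ x, x < v → x / K ∈ S → x ∈ F'.verts := by
    intro x hxv hjS
    have hjh : x / K < h := by
      rw [Nat.div_lt_iff_lt_mul hK, ← hvdef]; exact hxv
    have hb := hblock (x / K) hjh (x % K) (Nat.mod_lt _ hK)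
    have hxx : x / K * K + x % K = x := by rw [mul_comm]; exact Nat.div_add_mod x K
    rw [hxx] at hb
    exact vert_of _ hjS _ hb
  have hStop : S.card ≠ h := by
    intro htop
    apply hne
    have hSeq : S = Finset.range h :=
      Finset.eq_of_subset_of_card_le (Finset.filter_subset _ _) (by rw [Finset.card_range, htop])
    apply aux_hyper_ext
    · apply Finset.Subset.antisymm hsub.1
      rw [hverts]
      intro x hx
      have hxv : x < v := Finset.mem_range.1 hx
      apply cover_of_mem x hxv
      rw [hSeq]
      refine Finset.mem_range.2 ?_
      rw [Nat.div_lt_iff_lt_mul hK, ← hvdef]; exact hxv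
    · rw [hedgesS, hSeq, hedges']
  have hStop' : S.card ≤ h - 1 := by omega
  by_cases hP : ∃ i ∈ S, ∃ g, 1 ≤ g ∧ ℓ ≤ g * K ∧ ∀ t, 1 ≤ t → t ≤ g → (i + t) % h ∉ S
  · obtain ⟨i, hiS, g, hg1, hgl, hgap⟩ := hP
    have hih : i < h := hSh i hiS
    have hbase_card : (S.biUnion (fun j => (Finset.range K).image (fun t => j * K + t))).card
        = S.card * K := by
      rw [Finset.card_biUnion]
      · have hcards : ∀ j ∈ S, ((Finset.range K).image (fun t => j * K + t)).card = K := by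
          intro j _
          rw [Finset.card_image_of_injOn (fun a _ b _ hab => Nat.add_left_cancel hab),
            Finset.card_range]
        rw [Finset.sum_congr rfl hcards, Finset.sum_const, smul_eq_mul]
      · intro a _ b _ hab
        rw [Function.onFun, Finset.disjoint_left]
        intro x hxa hxb
        obtain ⟨t, ht, rfl⟩ := Finset.mem_image.1 hxa
        obtain ⟨t', ht', he⟩ := Finset.mem_image.1 hxb
        have e1 := aux_div_block hK a t (Finset.mem_range.1 ht)
        have e2 := aux_div_block hK b t' (Finset.mem_range.1 ht')
        rw [he] at e2
        rw [e1] at e2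
        exact hab e2
    have hbase_sub : (S.biUnion fun j => (Finset.range K).image fun t => j * K + t) ⊆ F'.verts := by
      intro x hx
      obtain ⟨j, hjS, hx2⟩ := Finset.mem_biUnion.1 hx
      obtain ⟨t, ht, rfl⟩ := Finset.mem_image.1 hx2
      exact vert_of j hjS _ (hblock j (hSh j hjS) t (Finset.mem_range.1 ht))
    have hT_sub : (Finset.range ℓ).image (fun t => ((i + 1) * K + t) % v) ⊆ eF i := by
      intro x hx
      obtain ⟨t, ht, rfl⟩ := Finset.mem_image.1 hx
      have ht' : t < ℓ := Finset.mem_range.1 ht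
      refine (mem_eF i _).2 ⟨K + t, by omega, ?_⟩
      congr 1
      ring
    have hT_card : ((Finset.range ℓ).image fun t => ((i + 1) * K + t) % v).card = ℓ := by
      rw [Finset.card_image_of_injOn, Finset.card_range]
      intro a ha b hb hab
      simp only [Finset.coe_range, Set.mem_Iio] at ha hb
      have h1 : a ≡ b [MOD v] := Nat.ModEq.add_left_cancel' ((i + 1) * K) hab
      rwa [Nat.ModEq, Nat.mod_eq_of_lt (by omega), Nat.mod_eq_of_lt (by omega)] at h1
    have hdisj : Disjoint (S.biUnion fun j => (Finset.range K).image fun t => j * K + t)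
        ((Finset.range ℓ).image fun t => ((i + 1) * K + t) % v) := by
      rw [Finset.disjoint_right]
      intro x hxT hxB
      obtain ⟨t, ht, rfl⟩ := Finset.mem_image.1 hxT
      have ht' : t < ℓ := Finset.mem_range.1 ht
      obtain ⟨j, hjS, hx2⟩ := Finset.mem_biUnion.1 hxB
      obtain ⟨s, hs, he⟩ := Finset.mem_image.1 hx2
      have hs' : s < K := Finset.mem_range.1 hs
      have hq : t / K < g := by
        rw [Nat.div_lt_iff_lt_mul hK]
        exact lt_of_lt_of_le ht' hgl
      have hdm : K * (t / K) + t % K = t := Nat.div_add_mod t K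
      have hrep : (i + 1) * K + t = (i + 1 + t / K) * K + t % K := by
        have h2 : (i + 1 + t / K) * K = (i + 1) * K + K * (t / K) := by ring
        rw [h2, add_assoc, hdm]
      have hmod : ((i + 1) * K + t) % v = ((i + 1 + t / K) % h) * K + t % K := by
        rw [hrep, hvdef]
        exact aux_mod_block hK (by omega) _ _ (Nat.mod_lt _ hK)
      have e1 := aux_div_block hK j s hs'
      have e2 := aux_div_block hK ((i + 1 + t / K) % h) (t % K) (Nat.mod_lt _ hK)
      rw [he, hmod, e2] at e1
      have hnot := hgap (1 + t / K) (Nat.le_add_right 1 _)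
        (by rw [add_comm]; exact Nat.succ_le_of_lt hq)
      apply hnot
      have h3 : (i + (1 + t / K)) % h = (i + 1 + t / K) % h := by rw [← add_assoc]
      rw [h3, e1]
      exact hjS
    have hcard_nA : S.card * K + ℓ ≤ F'.verts.card := by
      have hsub2 : (S.biUnion fun j => (Finset.range K).image fun t => j * K + t)
          ∪ ((Finset.range ℓ).image fun t => ((i + 1) * K + t) % v) ⊆ F'.verts :=
        Finset.union_subset hbase_sub (fun x hx => vert_of i hiS x (hT_sub hx))
      have h1 := Finset.card_le_card hsub2
      rwa [Finset.card_union_of_disjoint hdisj, hbase_card, hT_card] at h1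
    rw [div_lt_div_iff₀ hden1 hden2]
    have c1 : (F'.edges.card : ℝ) ≤ (S.card : ℝ) := by exact_mod_cast hm_le
    have c2 : (S.card : ℝ) + 1 ≤ (h : ℝ) := by exact_mod_cast (by omega : S.card + 1 ≤ h)
    have c3 : (S.card : ℝ) * K + ℓ ≤ (F'.verts.card : ℝ) := by exact_mod_cast hcard_nA
    have c4 : (k : ℝ) = (K : ℝ) + ℓ := by exact_mod_cast hkK
    have c5 : (v : ℝ) = (h : ℝ) * K := by exact_mod_cast hvdef
    have c6 : (1 : ℝ) ≤ K := by exact_mod_cast hK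
    have c7 : (1 : ℝ) ≤ ℓ := by exact_mod_cast hℓ1
    have c8 : (2 : ℝ) ≤ (F'.edges.card : ℝ) := by exact_mod_cast hm2
    have c9 : (2 : ℝ) ≤ (h : ℝ) := by exact_mod_cast hh
    rw [c5, c4]
    rw [c5, c4] at hden2
    have p1 : (0:ℝ) ≤ ((h:ℝ) - 1) * ((F'.verts.card : ℝ) - ((S.card : ℝ) * K + ℓ)) :=
      mul_nonneg (by linarith) (by linarith)
    have p2 : (0:ℝ) ≤ ((S.card : ℝ) - (F'.edges.card : ℝ)) * ((h:ℝ) * K - ((K:ℝ) + ℓ)) :=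
      mul_nonneg (by linarith) (by linarith)
    have p3 : (1:ℝ) ≤ ((S.card : ℝ) - 1) * ℓ := by
      have h5 : (1:ℝ) * 1 ≤ ((S.card : ℝ) - 1) * ℓ :=
        mul_le_mul (by linarith) c7 (by linarith) (by linarith)
      linarith
    nlinarith [p1, p2, p3]
  · have hVeq : F'.verts = C.verts := by
      apply Finset.Subset.antisymm hsub.1
      rw [hverts]
      intro x hx
      have hxv : x < v := Finset.mem_range.1 hx
      by_cases hjS : x / K ∈ S
      · exact cover_of_mem x hxv hjS
      · obtain ⟨s, hsS⟩ := hSne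
        have hsh : s < h := hSh s hsS
        have hjh : x / K < h := by rw [Nat.div_lt_iff_lt_mul hK, ← hvdef]; exact hxv
        set j := x / K with hjdef
        clear_value j
        have hjs : j ≠ s := fun e => hjS (e ▸ hsS)
        have hDne : ((Finset.range h).filter (fun d => 1 ≤ d ∧ (j + (h - d)) % h ∈ S)).Nonempty := by
          rcases Nat.lt_or_ge s j with hlt | hge
          · refine ⟨j - s, Finset.mem_filter.2 ⟨Finset.mem_range.2 (by omega), by omega, ?_⟩⟩
            have h1 : j + (h - (j - s)) = s + h := by omega
            rw [h1, Nat.add_mod_right, Nat.mod_eq_of_lt hsh]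
            exact hsS
          · have hlt : j < s := by omega
            refine ⟨h - (s - j), Finset.mem_filter.2 ⟨Finset.mem_range.2 (by omega), by omega, ?_⟩⟩
            have h1 : j + (h - (h - (s - j))) = s := by omega
            rw [h1, Nat.mod_eq_of_lt hsh]
            exact hsS
        set d := ((Finset.range h).filter (fun d => 1 ≤ d ∧ (j + (h - d)) % h ∈ S)).min' hDne
          with hddef
        clear_value d
        have hdD : d ∈ (Finset.range h).filter (fun d => 1 ≤ d ∧ (j + (h - d)) % h ∈ S) := by
          rw [hddef]; exact Finset.min'_mem _ hDne
        have hd1 : 1 ≤ d := (Finset.mem_filter.1 hdD).2.1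
        have hdh : d < h := Finset.mem_range.1 (Finset.mem_filter.1 hdD).1
        have hiS : (j + (h - d)) % h ∈ S := (Finset.mem_filter.1 hdD).2.2
        have hgap : ∀ t, 1 ≤ t → t ≤ d → ((j + (h - d)) % h + t) % h ∉ S := by
          intro t ht1 htd hmem
          have he : ((j + (h - d)) % h + t) % h = (j + (h - (d - t))) % h := by
            rw [Nat.mod_add_mod]
            congr 1
            omega
          rcases Nat.lt_or_ge t d with hlt | hge2
          · have hmem2 : d - t ∈ (Finset.range h).filter
                (fun d' => 1 ≤ d' ∧ (j + (h - d')) % h ∈ S) :=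
              Finset.mem_filter.2 ⟨Finset.mem_range.2 (by omega), by omega,
                by rw [← he]; exact hmem⟩
            have h1 := Finset.min'_le _ _ hmem2
            rw [← hddef] at h1
            omega
          · have htd' : t = d := by omega
            apply hjS
            rw [he, htd'] at hmem
            have h2 : j + (h - (d - d)) = j + h := by omega
            rw [h2, Nat.add_mod_right, Nat.mod_eq_of_lt hjh] at hmem
            exact hmem
        have hdK : d * K < ℓ := by
          by_contra hc
          push_neg at hc
          exact hP ⟨(j + (h - d)) % h, hiS, d, hd1, hc, hgap⟩
        have hxE : x ∈ eF ((j + (h - d)) % h) := by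
          refine (mem_eF _ _).2 ⟨d * K + x % K, ?_, ?_⟩
          · have h9 : x % K < K := Nat.mod_lt _ hK
            have h10 : k = K + ℓ := hkK
            linarith
          · have h1 : (j + (h - d)) % h * K + (d * K + x % K)
                = ((j + (h - d)) % h + d) * K + x % K := by ring
            have h2 : ((j + (h - d)) % h + d) % h = j := by
              rw [Nat.mod_add_mod]
              have h3 : j + (h - d) + d = j + h := by omega
              rw [h3, Nat.add_mod_right, Nat.mod_eq_of_lt hjh]
            rw [h1, hvdef,
              aux_mod_block hK (by omega : 0 < h) ((j + (h - d)) % h + d) (x % K)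
                (Nat.mod_lt _ hK), h2, hjdef, mul_comm]
            exact Nat.div_add_mod x K
        exact vert_of _ hiS x hxE
    have hn'v : F'.verts.card = v := by rw [hVeq, hCverts]
    rw [hn'v, div_lt_div_iff₀ hden2 hden2]
    have hMh : F'.edges.card < h := by omega
    have c1 : (F'.edges.card : ℝ) < (h : ℝ) := by exact_mod_cast hMh
    exact mul_lt_mul_of_pos_right (by linarith) hden2
end
end

section
/- Let k ≥ 2, let F be a k-uniform hypergraph with h hyperedges, let F̂ be a subgraph of F, and let r ∈ ℕ with r ≥ 1. Let H be a k-uniform hypergraph containing no (r, f)-cluster for any hyperedge f of H. Let (α_1, F_1), …, (α_m, F_m) be pairs such that the α_i are pairwise distinct and pairwise hyperedge-disjoint copies of F̂ in H, each F_i is a copy of F in H, and α_i and F_i share at least one hyperedge, for every i. Then for every hyperedge f of H, the number of indices i with f ∈ E(α_i) ∪ E(F_i) is at most h·r. -/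
open MeasureTheory Finset Filter

noncomputable section
attribute [local instance] Classical.propDecidable

variable {k : ℕ} {V : Type*} [DecidableEq V]

/-- the bound on Δ(G) in Lemma 3.2. -/
theorem stmt_17 {V : Type*} [DecidableEq V] (k : ℕ) (hk : 2 ≤ k)
    (F Fhat : UHypergraph k) (hFhat : Fhat.IsSubgraph F)
    (r : ℕ) (hr : 1 ≤ r)
    (E : Finset (Finset V)) (hunif : ∀ e ∈ E, e.card = k)
    (hnocluster : ∀ f ∈ E, ¬ HasCluster F E f r)
    (m : ℕ) (α Fi : Fin m → Finset (Finset V))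
    (hαinj : Function.Injective α)
    (hαdisj : ∀ i j, i ≠ j → Disjoint (α i) (α j))
    (hα : ∀ i, IsCopy Fhat E (α i))
    (hFi : ∀ i, IsCopy F E (Fi i))
    (hshare : ∀ i, (α i ∩ Fi i).Nonempty) :
    ∀ f ∈ E, (Finset.univ.filter fun i => f ∈ α i ∪ Fi i).card ≤ F.edges.card * r := by
  intro f hf
  by_contra hcon
  push_neg at hcon
  set h := F.edges.card with hh
  have hech : ∀ i, ∃ g, g ∈ α i ∧ g ∈ Fi i := by
    intro i
    obtain ⟨g, hg⟩ := hshare i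
    exact ⟨g, Finset.mem_inter.mp hg⟩
  choose e he1 he2 using hech
  have einj : ∀ i j, e i = e j → i = j := by
    intro i j hij
    by_contra hne
    exact (Finset.disjoint_left.mp (hαdisj i j hne)) (he1 i) (hij ▸ he1 j)
  have hFicard : ∀ i, (Fi i).card ≤ h := by
    intro i
    obtain ⟨φ, -, hA, -⟩ := hFi i
    rw [hA]
    exact Finset.card_image_le
  set S : Finset (Fin m) := Finset.univ.filter (fun i => f ∈ α i ∪ Fi i) with hS
  have hScard : h * r + 1 ≤ S.card := hcon
  have hpos : 1 ≤ h := by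
    have : S.Nonempty := Finset.card_pos.mp (by omega)
    obtain ⟨i0, -⟩ := this
    obtain ⟨φ, -, hA, -⟩ := hα i0
    have h1 := he1 i0
    rw [hA] at h1
    obtain ⟨e0, he0, -⟩ := Finset.mem_image.mp h1
    exact Finset.card_pos.mpr ⟨e0, hFhat.2 he0⟩
  set S' : Finset (Fin m) := Finset.univ.filter (fun i => f ∈ Fi i) with hS'
  have hS'card : h * r ≤ S'.card := by
    set T : Finset (Fin m) := Finset.univ.filter (fun i => f ∈ α i) with hT
    have hTcard : T.card ≤ 1 := by
      apply Finset.card_le_one.mpr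
      intro a ha b hb
      by_contra hab
      exact (Finset.disjoint_left.mp (hαdisj a b hab))
        (Finset.mem_filter.mp ha).2 (Finset.mem_filter.mp hb).2
    have hsub : S ⊆ S' ∪ T := by
      intro i hi
      rcases Finset.mem_union.mp (Finset.mem_filter.mp hi).2 with h1 | h1
      · exact Finset.mem_union_right _ (Finset.mem_filter.mpr ⟨Finset.mem_univ _, h1⟩)
      · exact Finset.mem_union_left _ (Finset.mem_filter.mpr ⟨Finset.mem_univ _, h1⟩)
    have := le_trans (Finset.card_le_card hsub) (Finset.card_union_le S' T)
    omega
  have main : ∀ t, t ≤ r → ∃ c : Fin t → Fin m,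
      (∀ j, c j ∈ S') ∧ (∀ j j' : Fin t, j' < j → e (c j) ∉ Fi (c j')) := by
    intro t
    induction t with
    | zero => exact fun _ => ⟨Fin.elim0, fun j => j.elim0, fun j => j.elim0⟩
    | succ t ih =>
      intro ht
      obtain ⟨c, hc1, hc2⟩ := ih (Nat.le_of_succ_le ht)
      set U : Finset (Finset V) := Finset.univ.biUnion (fun j : Fin t => Fi (c j)) with hU
      have hUcard : U.card ≤ t * h := by
        calc U.card ≤ ∑ j : Fin t, (Fi (c j)).card := Finset.card_biUnion_le
          _ ≤ ∑ _j : Fin t, h := Finset.sum_le_sum fun j _ => hFicard (c j)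
          _ = t * h := by simp [Finset.sum_const, Finset.card_univ]
      have hfilter : (S'.filter fun i => e i ∈ U).card ≤ U.card := by
        apply Finset.card_le_card_of_injOn e
        · intro i hi
          exact (Finset.mem_filter.mp hi).2
        · intro a _ b _ hab
          exact einj a b hab
      have hex : (S'.filter fun i => e i ∉ U).Nonempty := by
        rw [← Finset.card_pos]
        have := Finset.card_filter_add_card_filter_not
          (s := S') (p := fun i => e i ∈ U)
        have htr : t * h < h * r := by
          calc t * h < r * h := Nat.mul_lt_mul_of_lt_of_le ht (le_refl h) (by omega)
            _ = h * r := Nat.mul_comm r h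
        omega
      obtain ⟨i, hi⟩ := hex
      have hiS' : i ∈ S' := (Finset.mem_filter.mp hi).1
      have hiU : e i ∉ U := (Finset.mem_filter.mp hi).2
      refine ⟨Fin.snoc c i, ?_, ?_⟩
      · intro j
        refine Fin.lastCases ?_ ?_ j
        · simpa using hiS'
        · intro j'
          simpa using hc1 j'
      · intro j j' hlt
        revert hlt
        refine Fin.lastCases ?_ ?_ j
        · intro hlt
          have hne : j' ≠ Fin.last t := Fin.ne_last_of_lt hlt
          have hcast : (j'.castPred hne).castSucc = j' := Fin.castSucc_castPred j' hne
          rw [← hcast]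
          simp only [Fin.snoc_last, Fin.snoc_castSucc]
          intro hmem
          exact hiU (Finset.mem_biUnion.mpr ⟨j'.castPred hne, Finset.mem_univ _, hmem⟩)
        · intro j1 hlt
          have hne : j' ≠ Fin.last t := Fin.ne_last_of_lt (lt_trans hlt (Fin.castSucc_lt_last j1))
          have hcast : (j'.castPred hne).castSucc = j' := Fin.castSucc_castPred j' hne
          rw [← hcast]
          simp only [Fin.snoc_castSucc]
          apply hc2 j1 (j'.castPred hne)
          rw [← Fin.castSucc_lt_castSucc_iff, hcast]
          exact hlt
  obtain ⟨c, hc1, hc2⟩ := main r le_rfl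
  apply hnocluster f hf
  refine ⟨fun j => Fi (c j), ?_, ?_⟩
  · intro j
    exact ⟨hFi (c j), (Finset.mem_filter.mp (hc1 j)).2⟩
  · intro j hj
    exact ⟨e (c j), he2 (c j), fun j' hj' => hc2 j j' hj'⟩
end
end
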